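/- arXiv:1202.3410 — 2 statements merged into one kernel-verified Lean document; each statement's English description precedes it below -/
import Mathlib

section
/- Let P be a polynomial. In an associative algebra with su(2) generators satisfying [J3,J-] = -J- and [J+,J-] = 2J3, one has [J+, P(J-)] = 2·J3·P'(J-) + J-·P''(J-). -/
open Polynomial

lemma aux_commute {A : Type*} [Ring A] [Algebra ℝ A] (Jm : A) (P : Polynomial ℝ) :
    Jm * aeval Jm P = aeval Jm P * Jm := by
  induction P using Polynomial.induction_on with
  | C a => simp [Algebra.commutes]
  | add p q hp hq => simp only [map_add, mul_add, add_mul, hp, hq]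
  | monomial n a h =>
      simp only [pow_succ, ← mul_assoc, map_mul, aeval_X] at h ⊢
      rw [h]

lemma aux_J3 {A : Type*} [Ring A] [Algebra ℝ A]
    (Jm J3 : A) (h2 : J3 * Jm - Jm * J3 = -Jm) (P : Polynomial ℝ) :
    J3 * aeval Jm P - aeval Jm P * J3 = -(Jm * aeval Jm (derivative P)) := by
  induction P using Polynomial.induction_on with
  | C a => simp [Algebra.commutes]
  | add p q hp hq =>
      simp only [map_add, mul_add, add_mul]
      rw [show ∀ a b c d : A, a + b - (c + d) = (a - c) + (b - d) from by
        intros; abel, hp, hq]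
      abel
  | monomial n a h =>
      have key : Polynomial.C a * Polynomial.X ^ (n+1)
          = (Polynomial.C a * Polynomial.X ^ n) * Polynomial.X := by ring
      set Q : Polynomial ℝ := Polynomial.C a * Polynomial.X ^ n with hQ
      rw [key, derivative_mul, derivative_X, mul_one]
      set q := aeval Jm Q with hq
      set q' := aeval Jm (derivative Q) with hq'
      simp only [map_mul, map_add, aeval_X]
      have hcq : Jm * q = q * Jm := aux_commute Jm Q
      have hcq' : Jm * q' = q' * Jm := aux_commute Jm (derivative Q)
      have expand : J3 * (q * Jm) - q * Jm * J3
          = (J3 * q - q * J3) * Jm + q * (J3 * Jm - Jm * J3) := by noncomm_ring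
      rw [expand, h, h2, show -(Jm * q') * Jm = -(Jm * (q' * Jm)) from by
        noncomm_ring, ← hcq', show q * -Jm = -(q * Jm) from by noncomm_ring, ← hcq]
      noncomm_ring

/-- For a polynomial `P`, `[J+, P(J-)] = 2·J3·P'(J-) + J-·P''(J-)` under the
su(2) relations. -/
theorem su2_comm_Jp_polyJm {A : Type*} [Ring A] [Algebra ℝ A]
    (Jp Jm J3 : A)
    (h1 : J3 * Jp - Jp * J3 = Jp)
    (h2 : J3 * Jm - Jm * J3 = -Jm)
    (h3 : Jp * Jm - Jm * Jp = 2 * J3)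
    (P : Polynomial ℝ) :
    Jp * (Polynomial.aeval Jm P) - (Polynomial.aeval Jm P) * Jp =
      2 * J3 * Polynomial.aeval Jm (Polynomial.derivative P) +
        Jm * Polynomial.aeval Jm (Polynomial.derivative (Polynomial.derivative P)) := by
  induction P using Polynomial.induction_on with
  | C a => simp [Algebra.commutes]
  | add p q hp hq =>
      simp only [map_add, mul_add, add_mul]
      rw [show ∀ a b c d : A, a + b - (c + d) = (a - c) + (b - d) from by
        intros; abel, hp, hq]
      noncomm_ring
  | monomial n a h =>
      have key : Polynomial.C a * Polynomial.X ^ (n+1)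
          = (Polynomial.C a * Polynomial.X ^ n) * Polynomial.X := by ring
      have hd1 : ∀ R : Polynomial ℝ, derivative (R * Polynomial.X)
          = R + Polynomial.X * derivative R := by
        intro R; rw [derivative_mul, derivative_X]; ring
      have hd2 : ∀ R : Polynomial ℝ, derivative (R + Polynomial.X * derivative R)
          = 2 * derivative R + Polynomial.X * derivative (derivative R) := by
        intro R; rw [derivative_add, derivative_mul, derivative_X]; ring
      set Q : Polynomial ℝ := Polynomial.C a * Polynomial.X ^ n with hQ
      rw [key, hd1 Q, hd2 Q]
      set q := aeval Jm Q with hqd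
      set q' := aeval Jm (derivative Q) with hq'd
      set q'' := aeval Jm (derivative (derivative Q)) with hq''d
      simp only [map_mul, map_add, aeval_X, map_ofNat]
      have hcq' : Jm * q' = q' * Jm := aux_commute Jm (derivative Q)
      have hcq'' : Jm * q'' = q'' * Jm := aux_commute Jm (derivative (derivative Q))
      have hj3 : J3 * q - q * J3 = -(Jm * q') := aux_J3 Jm J3 h2 Q
      have expand : Jp * (q * Jm) - q * Jm * Jp
          = (Jp * q - q * Jp) * Jm + q * (Jp * Jm - Jm * Jp) := by noncomm_ring
      rw [expand, h, h3]
      have hq3 : q * (2 * J3) = 2 * J3 * q + 2 * (Jm * q') := by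
        have e : q * J3 - (J3 * q + Jm * q') = 0 := by
          rw [show q * J3 - (J3 * q + Jm * q')
              = -(J3 * q - q * J3) - Jm * q' from by noncomm_ring, hj3]
          noncomm_ring
        have e2 : q * J3 = J3 * q + Jm * q' := sub_eq_zero.mp e
        rw [show q * (2 * J3) = 2 * (q * J3) from by noncomm_ring, e2]
        noncomm_ring
      rw [hq3, show (2 * J3 * q' + Jm * q'') * Jm
          = 2 * J3 * (q' * Jm) + Jm * (q'' * Jm) from by noncomm_ring,
        ← hcq', ← hcq'']
      noncomm_ring
end

section
/- In a finite-dimensional representation (or for nilpotent J-), for any polynomial P with P(0)=0 one has e^{P(J-)} · J+ · e^{-P(J-)} = J+ - 2·J3·P'(J-) - J-·(P''(J-) + P'(J-)^2), where the su(2) relations [J3,J±] = ±J±, [J+,J-] = 2J3 hold and J- is nilpotent so the exponentials are finite sums. -/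
/-- The su(2) spin-N/2 raising operator on `ℂ^{N+1}`. -/
noncomputable def Jp (N : ℕ) : Matrix (Fin (N + 1)) (Fin (N + 1)) ℂ :=
  Matrix.of fun i j =>
    if (i : ℕ) = (j : ℕ) + 1 then (Real.sqrt (((j : ℕ) + 1) * (N - (j : ℕ))) : ℂ) else 0

/-- The su(2) spin-N/2 lowering operator on `ℂ^{N+1}`. -/
noncomputable def Jm (N : ℕ) : Matrix (Fin (N + 1)) (Fin (N + 1)) ℂ :=
  Matrix.of fun i j =>
    if (i : ℕ) + 1 = (j : ℕ) then (Real.sqrt ((j : ℕ) * (N - (j : ℕ) + 1)) : ℂ) else 0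

/-- The su(2) spin-N/2 diagonal generator on `ℂ^{N+1}`. -/
noncomputable def J3 (N : ℕ) : Matrix (Fin (N + 1)) (Fin (N + 1)) ℂ :=
  Matrix.diagonal fun k => ((k : ℕ) : ℂ) - (N : ℂ) / 2

lemma JpJm (N : ℕ) : Jp N * Jm N =
    Matrix.diagonal (fun k : Fin (N+1) =>
      (((k:ℕ) : ℂ) * ((N : ℂ) - ((k:ℕ) : ℂ) + 1))) := by
  ext i j
  rw [Matrix.mul_apply]
  rcases eq_or_ne i j with rfl | hij
  · rw [Matrix.diagonal_apply_eq]
    rcases h0 : (i : ℕ) with _ | m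
    · rw [Finset.sum_eq_zero]
      · norm_num
      · intro k _
        simp only [Jp, Matrix.of_apply]
        rw [if_neg (by omega), zero_mul]
    · have hm : m < N + 1 := by omega
      have hmN : m + 1 ≤ N := by omega
      rw [Finset.sum_eq_single (⟨m, hm⟩ : Fin (N+1))]
      · simp only [Jp, Jm, Matrix.of_apply, Fin.val_mk]
        rw [if_pos (by omega), if_pos (by omega), h0]
        have e1 : ((m:ℝ) + 1) * ((N:ℝ) - m) = ((m+1:ℕ):ℝ) * ((N:ℝ) - (m+1:ℕ) + 1) := by
          push_cast; ring
        have hnn : 0 ≤ ((m:ℝ) + 1) * ((N:ℝ) - m) := by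
          have : (m:ℝ) ≤ N := by exact_mod_cast Nat.le_of_lt_succ (by omega)
          nlinarith
        rw [← e1, ← Complex.ofReal_mul, Real.mul_self_sqrt hnn]
        push_cast; ring
      · intro k _ hk
        simp only [Jp, Jm, Matrix.of_apply]
        by_cases h : (i:ℕ) = (k:ℕ) + 1
        · rw [if_pos h, if_neg, mul_zero]
          intro hc; apply hk; apply Fin.ext; simp only [Fin.val_mk]; omega
        · rw [if_neg h, zero_mul]
      · intro h; exact absurd (Finset.mem_univ _) h
  · rw [Matrix.diagonal_apply_ne _ hij, Finset.sum_eq_zero]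
    intro k _
    simp only [Jp, Jm, Matrix.of_apply]
    by_cases h : (i:ℕ) = (k:ℕ) + 1
    · rw [if_pos h, if_neg, mul_zero]
      intro hc; apply hij; apply Fin.ext; omega
    · rw [if_neg h, zero_mul]

lemma JmJp (N : ℕ) : Jm N * Jp N =
    Matrix.diagonal (fun k : Fin (N+1) =>
      ((((k:ℕ) : ℂ) + 1) * ((N : ℂ) - ((k:ℕ) : ℂ)))) := by
  ext i j
  rw [Matrix.mul_apply]
  rcases eq_or_ne i j with rfl | hij
  · rw [Matrix.diagonal_apply_eq]
    by_cases hi : (i : ℕ) < N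
    · rw [Finset.sum_eq_single (⟨(i:ℕ)+1, by omega⟩ : Fin (N+1))]
      · simp only [Jp, Jm, Matrix.of_apply, Fin.val_mk, if_true, eq_self_iff_true]
        have e1 : (((i:ℕ)+1:ℕ):ℝ) * ((N:ℝ) - ((i:ℕ)+1:ℕ) + 1) = ((i:ℝ)+1) * ((N:ℝ) - (i:ℕ)) := by
          push_cast; ring
        have hnn : ((i:ℝ)+1) * ((N:ℝ) - (i:ℕ)) ≥ 0 := by
          have : ((i:ℕ):ℝ) ≤ N := by exact_mod_cast Nat.le_of_lt hi
          nlinarith [Nat.cast_nonneg (α := ℝ) (i:ℕ)]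
        rw [e1, ← Complex.ofReal_mul, Real.mul_self_sqrt hnn]
        push_cast; ring
      · intro k _ hk
        simp only [Jp, Jm, Matrix.of_apply]
        by_cases h : (i:ℕ) + 1 = (k:ℕ)
        · rw [if_pos h, if_neg, mul_zero]
          intro hc; apply hk; apply Fin.ext; simp only [Fin.val_mk]; omega
        · rw [if_neg h, zero_mul]
      · intro h; exact absurd (Finset.mem_univ _) h
    · have hi' : (i:ℕ) = N := by omega
      rw [Finset.sum_eq_zero]
      · rw [hi']; push_cast; ring
      · intro k _
        simp only [Jm, Matrix.of_apply]
        rw [if_neg (by omega), zero_mul]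
  · rw [Matrix.diagonal_apply_ne _ hij, Finset.sum_eq_zero]
    intro k _
    simp only [Jp, Jm, Matrix.of_apply]
    by_cases h : (i:ℕ) + 1 = (k:ℕ)
    · rw [if_pos h, if_neg, mul_zero]
      intro hc; apply hij; apply Fin.ext; omega
    · rw [if_neg h, zero_mul]

/-- `[J+, J-] = 2 J3`. -/
lemma comm1 (N : ℕ) : Jp N * Jm N = Jm N * Jp N + (2:ℂ) • J3 N := by
  rw [JpJm, JmJp]
  ext i j
  rcases eq_or_ne i j with rfl | hij
  · simp only [Matrix.add_apply, Matrix.smul_apply, Matrix.diagonal_apply_eq, J3, smul_eq_mul]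
    ring
  · simp [Matrix.diagonal_apply_ne _ hij, J3, hij]

/-- `J3 J- = J- J3 - J-`. -/
lemma comm2 (N : ℕ) : J3 N * Jm N = Jm N * J3 N - Jm N := by
  ext i j
  simp only [J3, Matrix.diagonal_mul, Matrix.mul_diagonal, Matrix.sub_apply, Jm, Matrix.of_apply]
  by_cases h : (i:ℕ) + 1 = (j:ℕ)
  · rw [if_pos h]
    have : ((j:ℕ) : ℂ) = ((i:ℕ) : ℂ) + 1 := by norm_cast; omega
    rw [this]; ring
  · rw [if_neg h]; ring

lemma Jm_pow_apply (N : ℕ) : ∀ (k : ℕ) (i j : Fin (N+1)), (j:ℕ) < (i:ℕ) + k → ((Jm N) ^ k) i j = 0 := by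
  intro k
  induction k with
  | zero =>
    intro i j h
    simp only [pow_zero]
    have : i ≠ j := by intro hc; subst hc; omega
    exact Matrix.one_apply_ne this
  | succ k ih =>
    intro i j h
    rw [pow_succ, Matrix.mul_apply]
    apply Finset.sum_eq_zero
    intro l _
    by_cases hl : (l:ℕ) + 1 = (j:ℕ)
    · have : (l:ℕ) < (i:ℕ) + k := by omega
      rw [ih i l this, zero_mul]
    · simp only [Jm, Matrix.of_apply]
      rw [if_neg hl, mul_zero]

lemma Jm_nilpotent (N : ℕ) : (Jm N) ^ (N+1) = 0 := by
  ext i j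
  rw [Matrix.zero_apply]
  exact Jm_pow_apply N (N+1) i j (by omega)

lemma Lpow3 (N : ℕ) : ∀ n : ℕ, J3 N * (Jm N)^n = (Jm N)^n * J3 N - (n:ℂ) • (Jm N)^n := by
  intro n
  induction n with
  | zero => simp
  | succ n ih =>
    rw [pow_succ, ← mul_assoc, ih, sub_mul, mul_assoc, comm2, smul_mul_assoc]
    push_cast
    simp only [mul_sub, ← mul_assoc, ← pow_succ]
    module

lemma LpowP (N : ℕ) : ∀ n : ℕ, Jp N * (Jm N)^(n+1) =
    (Jm N)^(n+1) * Jp N + (2*((n:ℂ)+1)) • ((Jm N)^n * J3 N) - (((n:ℂ)+1)*(n:ℂ)) • (Jm N)^n := by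
  intro n
  induction n with
  | zero =>
    simpa using comm1 N
  | succ n ih =>
    rw [pow_succ, ← mul_assoc, ih, sub_mul, add_mul, mul_assoc ((Jm N)^(n+1)) (Jp N) (Jm N),
      comm1, smul_mul_assoc, smul_mul_assoc, mul_assoc ((Jm N)^n) (J3 N) (Jm N), comm2]
    push_cast
    simp only [mul_add, mul_sub, mul_smul_comm, smul_sub, ← mul_assoc, ← pow_succ]
    module

open Polynomial in
lemma Lf3 (N : ℕ) (f : ℂ[X]) : J3 N * aeval (Jm N) f =
    aeval (Jm N) f * J3 N - Jm N * aeval (Jm N) (derivative f) := by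
  induction f using Polynomial.induction_on' with
  | add p q hp hq =>
    simp only [map_add, mul_add, add_mul]
    rw [hp, hq]; abel
  | monomial n a =>
    simp only [aeval_monomial, derivative_monomial, Algebra.algebraMap_eq_smul_one,
      smul_mul_assoc, one_mul]
    rcases n with _ | m
    · simp
    · simp only [Nat.add_sub_cancel]
      rw [mul_smul_comm, Lpow3 N (m+1), mul_smul_comm, ← pow_succ']
      push_cast
      module

open Polynomial in
lemma LfP (N : ℕ) (f : ℂ[X]) : Jp N * aeval (Jm N) f =
    aeval (Jm N) f * Jp N + (2:ℂ) • (aeval (Jm N) (derivative f) * J3 N)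
      - Jm N * aeval (Jm N) (derivative (derivative f)) := by
  induction f using Polynomial.induction_on' with
  | add p q hp hq =>
    simp only [map_add, mul_add, add_mul, smul_add]
    rw [hp, hq]; abel
  | monomial n a =>
    simp only [aeval_monomial, derivative_monomial, Algebra.algebraMap_eq_smul_one,
      smul_mul_assoc, one_mul]
    rcases n with _ | m
    · simp
    · rcases m with _ | m
      · rw [mul_smul_comm, LpowP N 0]
        push_cast
        simp only [pow_zero, one_mul, mul_zero, zero_smul, smul_zero, sub_zero]
        module
      · simp only [Nat.add_sub_cancel]
        rw [mul_smul_comm, LpowP N (m+1), mul_smul_comm, ← pow_succ']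
        push_cast
        module

lemma binom {R : Type*} [Ring R] [Algebra ℂ R] {a d0 d1 d2 : R}
    (h1 : a * d0 = d0 * a + d1) (h2 : a * d1 = d1 * a + d2) (h3 : a * d2 = d2 * a) :
    ∀ n : ℕ, a ^ n * d0 = d0 * a ^ n + (n : ℂ) • (d1 * a ^ (n - 1))
      + ((n : ℂ) * ((n : ℂ) - 1) / 2) • (d2 * a ^ (n - 2)) := by
  intro n
  induction n with
  | zero => simp
  | succ n ih =>
    rw [pow_succ', mul_assoc, ih]
    rcases n with _ | n
    · norm_num [h1]
    · rcases n with _ | n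
      · simp only [mul_add, mul_smul_comm, ← mul_assoc, h1, h2, h3]
        simp only [add_mul, mul_assoc, ← pow_succ']
        push_cast
        module
      · simp only [mul_add, mul_smul_comm, ← mul_assoc, h1, h2, h3]
        simp only [add_mul, mul_assoc, ← pow_succ']
        have e1 : (n + 1 + 1 + 1) - 1 = n + 1 + 1 := rfl
        have e2 : (n + 1 + 1 + 1) - 2 = n + 1 := rfl
        have e3 : (n + 1 + 1) - 1 = n + 1 := rfl
        have e4 : (n + 1 + 1) - 2 = n := rfl
        rw [e1, e2, e3, e4]
        push_cast
        module

open Nat Polynomial in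
/-- `e^{P(J-)} J+ e^{-P(J-)} = J+ - 2 J3 P'(J-) - J- (P''(J-) + P'(J-)²)` for a polynomial
`P` with `P(0) = 0`, in the spin-N/2 representation (where `J-` is nilpotent). -/
theorem exp_polyJm_conj_Jp (N : ℕ) (P : Polynomial ℂ) (hP : P.eval 0 = 0) :
    NormedSpace.exp (Polynomial.aeval (Jm N) P) * Jp N *
        NormedSpace.exp (-(Polynomial.aeval (Jm N) P)) =
      Jp N - 2 * (J3 N * Polynomial.aeval (Jm N) (Polynomial.derivative P)) -
        Jm N * (Polynomial.aeval (Jm N) (Polynomial.derivative (Polynomial.derivative P)) +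
          (Polynomial.aeval (Jm N) (Polynomial.derivative P)) ^ 2) := by
  set x := Jm N with hx
  set A := aeval x P with hA
  set Q := aeval x (derivative P) with hQ
  set Rm := aeval x (derivative (derivative P)) with hR
  -- commutation of polynomials in x
  have hcomm : ∀ p q : ℂ[X], aeval x p * aeval x q = aeval x q * aeval x p := by
    intro p q
    rw [← map_mul, ← map_mul, mul_comm]
  have hxA : ∀ p : ℂ[X], x * aeval x p = aeval x p * x := by
    intro p
    have := hcomm X p
    simpa using this
  -- A is "divisible by x"
  obtain ⟨g, hg⟩ : (X : ℂ[X]) ∣ P := by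
    rw [Polynomial.X_dvd_iff, Polynomial.coeff_zero_eq_eval_zero, hP]
  have hAg : A = x * aeval x g := by
    rw [hA, hg, map_mul]
    simp
  -- powers of A vanish
  have hApow : ∀ n : ℕ, N + 1 ≤ n → A ^ n = 0 := by
    intro n hn
    have hc : Commute x (aeval x g) := (hxA g)
    have h1 : A ^ (N+1) = x ^ (N+1) * (aeval x g) ^ (N+1) := by
      rw [hAg, hc.mul_pow]
    have h2 : A ^ (N+1) = 0 := by
      rw [h1, hx, Jm_nilpotent, zero_mul]
    calc A ^ n = A ^ (N + 1) * A ^ (n - (N+1)) := by rw [← pow_add]; congr 1; omega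
      _ = 0 := by rw [h2, zero_mul]
  have hsum : ∀ m : ℕ, N + 1 ≤ m →
      NormedSpace.exp A = ∑ n ∈ Finset.range m, ((n ! : ℂ))⁻¹ • A ^ n := by
    intro m hm
    rw [NormedSpace.exp_eq_tsum (𝕂 := ℂ)]
    refine tsum_eq_sum ?_
    intro n hn
    rw [hApow n (by simp at hn; omega), smul_zero]
  -- the three commutator data
  set D1 : Matrix (Fin (N+1)) (Fin (N+1)) ℂ := x * Rm - (2:ℂ) • (Q * J3 N) with hD1
  set D2 : Matrix (Fin (N+1)) (Fin (N+1)) ℂ := (-2:ℂ) • (x * (Q * Q)) with hD2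
  have h1 : A * Jp N = Jp N * A + D1 := by
    have := LfP N P
    rw [← hA, ← hQ, ← hR, ← hx] at this
    rw [hD1]
    -- this : Jp*A = A*Jp + 2•(Q*J3) - x*Rm
    have := this.symm
    calc A * Jp N = (A * Jp N + (2:ℂ) • (Q * J3 N) - x * Rm) + (x * Rm - (2:ℂ) • (Q * J3 N)) := by abel
      _ = Jp N * A + (x * Rm - (2:ℂ) • (Q * J3 N)) := by rw [← this]
  have hAJ3 : A * J3 N = J3 N * A + x * Q := by
    have := Lf3 N P
    rw [← hA, ← hQ, ← hx] at this
    calc A * J3 N = (A * J3 N - x * Q) + x * Q := by abel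
      _ = J3 N * A + x * Q := by rw [← this]
  have h2 : A * D1 = D1 * A + D2 := by
    have hAx : A * (x * Rm) = (x * Rm) * A := by
      rw [hA, hx]
      have h' : aeval (Jm N) P * (aeval (Jm N) (X : ℂ[X]) * aeval (Jm N) (derivative (derivative P)))
          = (aeval (Jm N) (X : ℂ[X]) * aeval (Jm N) (derivative (derivative P))) * aeval (Jm N) P := by
        rw [← map_mul, hcomm]
      simpa using h'
    have hAQ : A * Q = Q * A := hcomm P (derivative P)
    have hxQQ : Q * (x * Q) = x * (Q * Q) := by
      rw [hQ, ← mul_assoc, ← hxA (derivative P), mul_assoc]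
    rw [hD1, hD2]
    rw [mul_sub, sub_mul, hAx, mul_smul_comm, smul_mul_assoc, ← mul_assoc, hAQ]
    rw [mul_assoc Q A (J3 N), hAJ3, mul_add, ← mul_assoc Q (J3 N) A, hxQQ]
    module
  have h3 : A * D2 = D2 * A := by
    rw [hD2, mul_smul_comm, smul_mul_assoc]
    congr 1
    have h' : aeval x P * (aeval x (X : ℂ[X]) * (aeval x (derivative P) * aeval x (derivative P)))
        = (aeval x (X : ℂ[X]) * (aeval x (derivative P) * aeval x (derivative P))) * aeval x P := by
      rw [← map_mul, ← map_mul, hcomm]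
    simpa [← hQ] using h'
  have hbin := binom h1 h2 h3
  -- factorial coefficient identities
  have hfac1 : ∀ m : ℕ, ((((m+1)! : ℕ) : ℂ))⁻¹ * ((m+1 : ℕ) : ℂ) = ((m ! : ℂ))⁻¹ := by
    intro m
    have h0 : ((m:ℂ)+1) ≠ 0 := Nat.cast_add_one_ne_zero m
    have hm : ((m ! : ℕ) : ℂ) ≠ 0 := Nat.cast_ne_zero.mpr (Nat.factorial_ne_zero m)
    rw [Nat.factorial_succ]
    push_cast
    rw [mul_inv]
    field_simp
  have hfac2 : ∀ m : ℕ, (((m+2)! : ℂ))⁻¹ * (((m+2 : ℕ) : ℂ) * (((m+2 : ℕ) : ℂ) - 1) / 2)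
      = 2⁻¹ * ((m ! : ℂ))⁻¹ := by
    intro m
    have h0 : ((m:ℂ)+1) ≠ 0 := Nat.cast_add_one_ne_zero m
    have h2 : ((m:ℂ)+2) ≠ 0 := by
      have h := Nat.cast_add_one_ne_zero (R := ℂ) (m+1)
      push_cast at h
      intro hc; exact h (by linear_combination hc)
    have hm : ((m ! : ℕ) : ℂ) ≠ 0 := Nat.cast_ne_zero.mpr (Nat.factorial_ne_zero m)
    have hf : ((m+2)! : ℕ) = (m+2) * ((m+1) * m !) := by
      rw [Nat.factorial_succ, Nat.factorial_succ]
    rw [hf]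
    push_cast
    rw [mul_inv, mul_inv]
    field_simp
    ring
  -- key identity
  have key : NormedSpace.exp A * Jp N
      = (Jp N + D1 + (2⁻¹:ℂ) • D2) * NormedSpace.exp A := by
    conv_lhs => rw [hsum (N+3) (by omega), Finset.sum_mul]
    have step1 : ∀ n ∈ Finset.range (N+3), ((n ! : ℂ))⁻¹ • A ^ n * Jp N
        = ((n ! : ℂ))⁻¹ • (Jp N * A ^ n)
          + (((n ! : ℂ))⁻¹ * (n : ℂ)) • (D1 * A ^ (n-1))
          + (((n ! : ℂ))⁻¹ * ((n : ℂ) * ((n : ℂ) - 1) / 2)) • (D2 * A ^ (n-2)) := by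
      intro n _
      rw [smul_mul_assoc, hbin n, smul_add, smul_add, smul_smul, smul_smul]
    rw [Finset.sum_congr rfl step1, Finset.sum_add_distrib, Finset.sum_add_distrib]
    have hS1 : ∑ n ∈ Finset.range (N+3), ((n ! : ℂ))⁻¹ • (Jp N * A ^ n)
        = Jp N * NormedSpace.exp A := by
      rw [hsum (N+3) (by omega), Finset.mul_sum]
      exact Finset.sum_congr rfl fun n _ => (mul_smul_comm _ _ _).symm
    have hS2 : ∑ n ∈ Finset.range (N+3), (((n ! : ℂ))⁻¹ * (n : ℂ)) • (D1 * A ^ (n-1))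
        = D1 * NormedSpace.exp A := by
      rw [show N+3 = (N+2)+1 from rfl, Finset.sum_range_succ']
      simp only [Nat.cast_zero, mul_zero, zero_smul, add_zero]
      rw [hsum (N+2) (by omega), Finset.mul_sum]
      refine Finset.sum_congr rfl fun m _ => ?_
      rw [Nat.add_sub_cancel, hfac1 m, mul_smul_comm]
    have hS3 : ∑ n ∈ Finset.range (N+3), (((n ! : ℂ))⁻¹ * ((n : ℂ) * ((n : ℂ) - 1) / 2)) • (D2 * A ^ (n-2))
        = (2⁻¹:ℂ) • (D2 * NormedSpace.exp A) := by
      rw [show N+3 = (N+2)+1 from rfl, Finset.sum_range_succ']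
      rw [show N+2 = (N+1)+1 from rfl, Finset.sum_range_succ']
      norm_num
      rw [hsum (N+1) (by omega), Finset.mul_sum, Finset.smul_sum]
      refine Finset.sum_congr rfl fun m _ => ?_
      rw [mul_smul_comm, smul_smul]
      congr 1
      have hcoef := hfac2 m
      push_cast at hcoef ⊢
      linear_combination hcoef
    rw [hS1, hS2, hS3]
    conv_rhs => rw [add_mul, add_mul, smul_mul_assoc]
  -- invertibility
  have hinv : NormedSpace.exp A * NormedSpace.exp (-A) = 1 := by
    rw [← Matrix.exp_add_of_commute A (-A) (Commute.neg_right (Commute.refl A))]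
    rw [add_neg_cancel, NormedSpace.exp_zero]
  calc NormedSpace.exp A * Jp N * NormedSpace.exp (-A)
      = (Jp N + D1 + (2⁻¹:ℂ) • D2) * (NormedSpace.exp A * NormedSpace.exp (-A)) := by
        rw [key, mul_assoc]
    _ = Jp N + D1 + (2⁻¹:ℂ) • D2 := by rw [hinv, mul_one]
    _ = Jp N - 2 * (J3 N * Q) - x * (Rm + Q ^ 2) := by
        have hJ3Q : J3 N * Q = Q * J3 N - x * Rm := by
          have := Lf3 N (derivative P)
          rw [← hQ, ← hR, ← hx] at this
          exact this
        rw [hJ3Q, hD1, hD2, sq, mul_add]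
        have h2M : (2 : Matrix (Fin (N+1)) (Fin (N+1)) ℂ) * (Q * J3 N - x * Rm)
            = (2:ℂ) • (Q * J3 N - x * Rm) := by
          rw [two_smul, two_mul]
        rw [h2M]
        module
end
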